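/- For every s ∈ ℝ and every w ∈ ℝ, 0 < g_s(w) ≤ √(2π)/4. -/

import Mathlib

open MeasureTheory

noncomputable def Phi (s : ℝ) : ℝ :=
  ((ProbabilityTheory.gaussianReal 0 1) (Set.Iic s)).toReal

noncomputable def steinG (s w : ℝ) : ℝ :=
  Real.exp (w ^ 2 / 2) *
    ∫ u in Set.Iic w, ((if u ≤ s then (1 : ℝ) else 0) - Phi s) * Real.exp (-u ^ 2 / 2)

open Real Set Filter Topology

/-- The standard Gaussian weight. -/
noncomputable def gaussW (u : ℝ) : ℝ := Real.exp (-u ^ 2 / 2)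

lemma gaussW_eq : gaussW = fun u : ℝ => Real.exp (-(1/2) * u ^ 2) := by
  funext u; unfold gaussW; congr 1; ring

lemma integrable_gaussW : Integrable gaussW := by
  rw [gaussW_eq]; exact integrable_exp_neg_mul_sq (by norm_num)

lemma continuous_gaussW : Continuous gaussW := by
  unfold gaussW; continuity

lemma integral_gaussW : ∫ u : ℝ, gaussW u = Real.sqrt (2 * π) := by
  rw [gaussW_eq]
  rw [integral_gaussian]
  rw [show π / (1/2) = 2 * π by ring]

noncomputable def II (w : ℝ) : ℝ := ∫ u in Set.Iic w, gaussW u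

noncomputable def GG (w : ℝ) : ℝ := ∫ u in (0:ℝ)..w, gaussW u

lemma II_pos (w : ℝ) : 0 < II w := by
  rw [II, setIntegral_pos_iff_support_of_nonneg_ae]
  · have : Function.support gaussW = Set.univ := by
      ext u; simp [gaussW, (Real.exp_pos _).ne']
    rw [this, Set.univ_inter]
    simp
  · exact Eventually.of_forall fun u => (Real.exp_pos _).le
  · exact integrable_gaussW.integrableOn

lemma Ioi_pos (w : ℝ) : 0 < ∫ u in Set.Ioi w, gaussW u := by
  rw [setIntegral_pos_iff_support_of_nonneg_ae]
  · have : Function.support gaussW = Set.univ := by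
      ext u; simp [gaussW, (Real.exp_pos _).ne']
    rw [this, Set.univ_inter]
    simp
  · exact Eventually.of_forall fun u => (Real.exp_pos _).le
  · exact integrable_gaussW.integrableOn

lemma II_add_Ioi (w : ℝ) : II w + ∫ u in Set.Ioi w, gaussW u = Real.sqrt (2 * π) := by
  rw [II, intervalIntegral.integral_Iic_add_Ioi integrable_gaussW.integrableOn integrable_gaussW.integrableOn,
    integral_gaussW]

lemma II_lt (w : ℝ) : II w < Real.sqrt (2 * π) := by
  have := II_add_Ioi w
  have := Ioi_pos w
  linarith

lemma II_mono : Monotone II := by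
  intro a b hab
  exact setIntegral_mono_set integrable_gaussW.integrableOn
    (Eventually.of_forall fun u => (Real.exp_pos _).le)
    (HasSubset.Subset.eventuallyLE (Set.Iic_subset_Iic.2 hab))

lemma II_neg (w : ℝ) : II (-w) = Real.sqrt (2 * π) - II w := by
  have h : II (-w) = ∫ u in Set.Ioi w, gaussW u := by
    rw [II]
    have : ∀ u : ℝ, gaussW u = gaussW (-u) := by
      intro u; unfold gaussW; congr 1; ring
    calc (∫ u in Set.Iic (-w), gaussW u) = ∫ u in Set.Iic (-w), gaussW (-u) := by
          exact setIntegral_congr_fun measurableSet_Iic fun u _ => this u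
      _ = ∫ u in Set.Ioi (-(-w)), gaussW u := integral_comp_neg_Iic _ _
      _ = ∫ u in Set.Ioi w, gaussW u := by rw [neg_neg]
  rw [h]
  have := II_add_Ioi w
  linarith

lemma II_zero : II 0 = Real.sqrt (2 * π) / 2 := by
  have := II_neg 0
  rw [neg_zero] at this
  linarith

lemma II_eq_GG (w : ℝ) : II w = Real.sqrt (2 * π) / 2 + GG w := by
  have := intervalIntegral.integral_Iic_sub_Iic (μ := volume) (f := gaussW) (a := 0) (b := w)
    integrable_gaussW.integrableOn integrable_gaussW.integrableOn
  rw [II, GG, ← this, ← II, ← II, II_zero]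
  ring

lemma GG_hasDeriv (x : ℝ) : HasDerivAt GG (gaussW x) x :=
  intervalIntegral.integral_hasDerivAt_right integrable_gaussW.intervalIntegrable
    continuous_gaussW.stronglyMeasurable.stronglyMeasurableAtFilter
    continuous_gaussW.continuousAt

lemma GG_tendsto : Tendsto GG atTop (𝓝 (Real.sqrt (2 * π) / 2)) := by
  have h := intervalIntegral_tendsto_integral_Ioi (μ := volume) 0
    integrable_gaussW.integrableOn (tendsto_id (x := atTop))
  have hIoi : ∫ u in Set.Ioi (0:ℝ), gaussW u = Real.sqrt (2 * π) / 2 := by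
    rw [gaussW_eq, integral_gaussian_Ioi, show π / (1/2) = 2 * π by ring]
  rw [hIoi] at h
  exact h

noncomputable def AA (x : ℝ) : ℝ := GG x * GG x - π / 2 * (1 - Real.exp (-x ^ 2 / 2))
noncomputable def BB (x : ℝ) : ℝ := 2 * GG x - π / 2 * x

lemma exp_hasDeriv (x : ℝ) :
    HasDerivAt (fun x : ℝ => Real.exp (-x ^ 2 / 2)) (Real.exp (-x ^ 2 / 2) * (-x)) x := by
  have h : HasDerivAt (fun x : ℝ => -x ^ 2 / 2) (-x) x := by
    have := ((hasDerivAt_pow 2 x).neg).div_const 2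
    refine this.congr_deriv ?_
    push_cast; ring
  exact (Real.hasDerivAt_exp _).comp x h

lemma AA_hasDeriv (x : ℝ) : HasDerivAt AA (Real.exp (-x ^ 2 / 2) * BB x) x := by
  have h1 := GG_hasDeriv x
  have h2 := exp_hasDeriv x
  have h3 := ((h1.mul h1).sub (((h2.const_sub 1)).const_mul (π / 2)))
  refine h3.congr_deriv ?_
  unfold BB gaussW
  ring

lemma BB_hasDeriv (x : ℝ) : HasDerivAt BB (2 * Real.exp (-x ^ 2 / 2) - π / 2) x := by
  have h1 := (GG_hasDeriv x).const_mul 2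
  have h2 := (hasDerivAt_id x).const_mul (π / 2)
  have := h1.sub h2
  refine this.congr_deriv ?_
  unfold gaussW
  ring

lemma sqrt_two_pi_sq : Real.sqrt (2 * π) / 2 * (Real.sqrt (2 * π) / 2) = π / 2 := by
  have h : Real.sqrt (2 * π) * Real.sqrt (2 * π) = 2 * π :=
    Real.mul_self_sqrt (by positivity)
  nlinarith

lemma AA_tendsto : Tendsto AA atTop (𝓝 0) := by
  have hexp : Tendsto (fun x : ℝ => Real.exp (-x ^ 2 / 2)) atTop (𝓝 0) := by
    apply Real.tendsto_exp_atBot.comp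
    apply Tendsto.atBot_div_const (by norm_num : (0:ℝ) < 2)
    exact tendsto_neg_atBot_iff.mpr (tendsto_pow_atTop (by norm_num))
  have h1 : Tendsto (fun _ : ℝ => (1:ℝ)) atTop (𝓝 1) := tendsto_const_nhds
  have h := (GG_tendsto.mul GG_tendsto).sub ((h1.sub hexp).const_mul (π / 2))
  have heq : Real.sqrt (2 * π) / 2 * (Real.sqrt (2 * π) / 2) - π / 2 * (1 - 0) = 0 := by
    rw [sqrt_two_pi_sq]; ring
  rw [heq] at h
  exact h

lemma GG_zero : GG 0 = 0 := intervalIntegral.integral_same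

lemma AA_zero : AA 0 = 0 := by unfold AA; rw [GG_zero]; norm_num

lemma BB_zero : BB 0 = 0 := by unfold BB; rw [GG_zero]; ring

lemma AA_nonneg (w : ℝ) (hw : 0 ≤ w) : 0 ≤ AA w := by
  by_cases h : ∀ z ∈ Set.Icc 0 w, 0 ≤ BB z
  · have mono : MonotoneOn AA (Set.Icc 0 w) := by
      apply monotoneOn_of_deriv_nonneg (convex_Icc 0 w)
      · exact fun x _ => (AA_hasDeriv x).differentiableAt.continuousAt.continuousWithinAt
      · exact fun x _ => (AA_hasDeriv x).differentiableAt.differentiableWithinAt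
      · intro x hx
        rw [(AA_hasDeriv x).deriv]
        rw [interior_Icc] at hx
        exact mul_nonneg (Real.exp_pos _).le (h x ⟨hx.1.le, hx.2.le⟩)
    have := mono ⟨le_rfl, hw⟩ ⟨hw, le_rfl⟩ hw
    rwa [AA_zero] at this
  · push_neg at h
    obtain ⟨z, hz, hBz⟩ := h
    have hz0 : 0 < z := by
      rcases eq_or_lt_of_le hz.1 with h0 | h0
      · exfalso; rw [← h0, BB_zero] at hBz; exact absurd hBz (lt_irrefl 0)
      · exact h0
    obtain ⟨ξ, hξ, hslope⟩ := exists_hasDerivAt_eq_slope BB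
      (fun x => 2 * Real.exp (-x ^ 2 / 2) - π / 2) hz0
      (fun x _ => (BB_hasDeriv x).differentiableAt.continuousAt.continuousWithinAt)
      (fun x _ => BB_hasDeriv x)
    rw [BB_zero] at hslope
    have hξneg : 2 * Real.exp (-ξ ^ 2 / 2) - π / 2 < 0 := by
      rw [hslope]
      apply div_neg_of_neg_of_pos
      · simpa using hBz
      · simpa using hz0
    -- BB is antitone on [ξ, ∞)
    have hBanti : AntitoneOn BB (Set.Ici ξ) := by
      apply antitoneOn_of_deriv_nonpos (convex_Ici ξ)
      · exact fun x _ => (BB_hasDeriv x).differentiableAt.continuousAt.continuousWithinAt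
      · exact fun x _ => (BB_hasDeriv x).differentiableAt.differentiableWithinAt
      · intro x hx
        rw [(BB_hasDeriv x).deriv, interior_Ici] at *
        have hxξ : ξ ≤ x := (Set.mem_Ioi.mp hx).le
        have : Real.exp (-x ^ 2 / 2) ≤ Real.exp (-ξ ^ 2 / 2) := by
          apply Real.exp_le_exp.mpr
          have hξ0 : 0 < ξ := hξ.1
          nlinarith
        linarith
    have hBneg : ∀ y, w ≤ y → BB y < 0 := by
      intro y hy
      have hzy : z ≤ y := le_trans hz.2 hy
      have hξz : ξ ≤ z := hξ.2.le
      have := hBanti (Set.mem_Ici.mpr hξz) (Set.mem_Ici.mpr (le_trans hξz hzy)) hzy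
      linarith
    have hAanti : AntitoneOn AA (Set.Ici w) := by
      apply antitoneOn_of_deriv_nonpos (convex_Ici w)
      · exact fun x _ => (AA_hasDeriv x).differentiableAt.continuousAt.continuousWithinAt
      · exact fun x _ => (AA_hasDeriv x).differentiableAt.differentiableWithinAt
      · intro x hx
        rw [(AA_hasDeriv x).deriv, interior_Ici] at *
        exact mul_nonpos_of_nonneg_of_nonpos (Real.exp_pos _).le
          (hBneg x (Set.mem_Ioi.mp hx).le).le
    apply le_of_tendsto AA_tendsto
    filter_upwards [eventually_ge_atTop w] with y hy
    exact hAanti (Set.mem_Ici.mpr le_rfl) (Set.mem_Ici.mpr hy) hy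

lemma product_le (w : ℝ) :
    Real.exp (w ^ 2 / 2) * (II w * (Real.sqrt (2 * π) - II w)) ≤ π / 2 := by
  -- reduce to w ≥ 0 by symmetry
  wlog hw : 0 ≤ w generalizing w
  · have h := this (-w) (by linarith [le_of_not_ge hw])
    have hs : II (-w) = Real.sqrt (2 * π) - II w := II_neg w
    rw [hs] at h
    calc Real.exp (w ^ 2 / 2) * (II w * (Real.sqrt (2 * π) - II w))
        = Real.exp ((-w) ^ 2 / 2) *
          ((Real.sqrt (2 * π) - II w) * (Real.sqrt (2 * π) - (Real.sqrt (2 * π) - II w))) := by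
          ring_nf
      _ ≤ π / 2 := h
  · have hA := AA_nonneg w hw
    unfold AA at hA
    have hII := II_eq_GG w
    have hexp : Real.exp (w ^ 2 / 2) * Real.exp (-w ^ 2 / 2) = 1 := by
      rw [← Real.exp_add, show w ^ 2 / 2 + -w ^ 2 / 2 = 0 by ring, Real.exp_zero]
    have hpos : 0 < Real.exp (w ^ 2 / 2) := Real.exp_pos _
    have hprod : II w * (Real.sqrt (2 * π) - II w)
        = π / 2 - GG w * GG w := by
      rw [hII]
      nlinarith [sqrt_two_pi_sq]
    rw [hprod]
    have h1 : π / 2 - GG w * GG w ≤ π / 2 * Real.exp (-w ^ 2 / 2) := by nlinarith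
    calc Real.exp (w ^ 2 / 2) * (π / 2 - GG w * GG w)
        ≤ Real.exp (w ^ 2 / 2) * (π / 2 * Real.exp (-w ^ 2 / 2)) :=
          mul_le_mul_of_nonneg_left h1 hpos.le
      _ = π / 2 * (Real.exp (w ^ 2 / 2) * Real.exp (-w ^ 2 / 2)) := by ring
      _ = π / 2 := by rw [hexp]; ring

lemma Phi_eq (s : ℝ) : Phi s = II s / Real.sqrt (2 * π) := by
  rw [Phi, ProbabilityTheory.gaussianReal_apply_eq_integral 0 one_ne_zero (Set.Iic s)]
  have hpdf : ∀ x : ℝ, ProbabilityTheory.gaussianPDFReal 0 1 x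
      = (Real.sqrt (2 * π))⁻¹ * gaussW x := by
    intro x
    simp only [ProbabilityTheory.gaussianPDFReal, NNReal.coe_one, mul_one, sub_zero, gaussW]
  have : ∫ x in Set.Iic s, ProbabilityTheory.gaussianPDFReal 0 1 x
      = (Real.sqrt (2 * π))⁻¹ * II s := by
    rw [II, ← integral_const_mul]
    exact setIntegral_congr_fun measurableSet_Iic fun x _ => hpdf x
  rw [this, ENNReal.toReal_ofReal (mul_nonneg (by positivity) (II_pos s).le)]
  rw [inv_mul_eq_div]

lemma steinG_integral (s w : ℝ) :
    (∫ u in Set.Iic w, ((if u ≤ s then (1 : ℝ) else 0) - Phi s) * Real.exp (-u ^ 2 / 2))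
      = II (min s w) - Phi s * II w := by
  have hfun : ∀ u : ℝ, ((if u ≤ s then (1 : ℝ) else 0) - Phi s) * Real.exp (-u ^ 2 / 2)
      = (Set.Iic s).indicator gaussW u - Phi s * gaussW u := by
    intro u
    by_cases h : u ≤ s
    · simp [Set.indicator, h, gaussW]; ring
    · simp [Set.indicator, h, gaussW]
  simp_rw [hfun]
  rw [integral_sub ((integrable_gaussW.indicator measurableSet_Iic).integrableOn)
    (integrable_gaussW.integrableOn.const_mul _)]
  rw [integral_const_mul, ← II]
  congr 1
  rw [setIntegral_indicator measurableSet_Iic, Set.Iic_inter_Iic, II, min_comm]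

lemma steinG_eq (s w : ℝ) :
    steinG s w = Real.exp (w ^ 2 / 2) *
      (II (min s w) * (Real.sqrt (2 * π) - II (max s w)) / Real.sqrt (2 * π)) := by
  rw [steinG, steinG_integral, Phi_eq]
  congr 1
  have hs : (0:ℝ) < Real.sqrt (2 * π) := by positivity
  rcases le_total s w with h | h
  · rw [min_eq_left h, max_eq_right h]
    field_simp
  · rw [min_eq_right h, max_eq_left h]
    field_simp

theorem steinG_pos_and_le (s w : ℝ) :
    0 < steinG s w ∧ steinG s w ≤ Real.sqrt (2 * Real.pi) / 4 := by
  have hs : (0:ℝ) < Real.sqrt (2 * π) := by positivity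
  rw [steinG_eq]
  constructor
  · apply mul_pos (Real.exp_pos _)
    apply div_pos _ hs
    exact mul_pos (II_pos _) (by linarith [II_lt (max s w)])
  · have h1 : II (min s w) ≤ II w := II_mono (min_le_right s w)
    have h2 : II w ≤ II (max s w) := II_mono (le_max_right s w)
    have h3 : II (min s w) * (Real.sqrt (2 * π) - II (max s w))
        ≤ II w * (Real.sqrt (2 * π) - II w) := by
      apply mul_le_mul h1 (by linarith) (by linarith [II_lt (max s w)]) (II_pos w).le
    have h4 := product_le w
    have hP := Real.exp_pos (w ^ 2 / 2)
    have h5 : Real.exp (w ^ 2 / 2) * (II (min s w) * (Real.sqrt (2 * π) - II (max s w)))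
        ≤ π / 2 := le_trans (mul_le_mul_of_nonneg_left h3 hP.le) h4
    have hkey : Real.exp (w ^ 2 / 2) *
        (II (min s w) * (Real.sqrt (2 * π) - II (max s w)) / Real.sqrt (2 * π))
        ≤ (π / 2) / Real.sqrt (2 * π) := by
      rw [mul_div_assoc'] at *
      exact div_le_div_of_nonneg_right h5 hs.le
    have hfin : (π / 2) / Real.sqrt (2 * π) = Real.sqrt (2 * π) / 4 := by
      have h : Real.sqrt (2 * π) * Real.sqrt (2 * π) = 2 * π :=
        Real.mul_self_sqrt (by positivity)
      rw [div_eq_div_iff hs.ne' (by norm_num : (4:ℝ) ≠ 0), h]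
      ring
    rw [← hfin]
    exact hkey
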